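/- Let θ : E → ℝ be rotation angles on the edges of a finite graph around distinguished adjacent vertices i, j. Suppose for every edge e ≠ (i,j) incident to i or j, sin(2θ_e) = y_e ∈ [0,1] and the values y_e at each of i and j sum to at most 1 - y with y = sin(2θ_{ij}) ∈ [0,1]. Then 1/2 + (1/2)·∏_{k∼i, k≠j} cos(2θ_{ik})·∏_{l∼j, l≠i} cos(2θ_{lj}) + (1/2)·sin(2θ_{ij})·(∏_{k∼i, k≠j} cos(2θ_{ik}) + ∏_{l∼j, l≠i} cos(2θ_{lj})) ≥ 1/2 + y + y²/2, assuming all θ_e ∈ [0, π/4] so the cosines are nonnegative. -/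
import Mathlib

lemma prod_sqrt_one_sub_sq {ι : Type*} (s : Finset ι) (f : ι → ℝ)
    (hf : ∀ k ∈ s, f k ∈ Set.Icc (0:ℝ) 1) (hsum : ∑ k ∈ s, f k ≤ 1) :
    ∏ k ∈ s, Real.sqrt (1 - (f k) ^ 2) ≥ Real.sqrt (1 - (∑ k ∈ s, f k) ^ 2) := by
  induction s using Finset.cons_induction with
  | empty => simp
  | cons a s ha ih =>
    rw [Finset.prod_cons, Finset.sum_cons]
    rw [Finset.sum_cons] at hsum
    have hfa := hf a (Finset.mem_cons_self a s)
    have hS0 : (0:ℝ) ≤ ∑ k ∈ s, f k :=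
      Finset.sum_nonneg fun k hk => (hf k (Finset.mem_cons_of_mem hk)).1
    have hS1 : ∑ k ∈ s, f k ≤ 1 := by linarith [hfa.1]
    have ihs := ih (fun k hk => hf k (Finset.mem_cons_of_mem hk)) hS1
    set t := f a
    set S := ∑ k ∈ s, f k
    have h1 : Real.sqrt (1 - t ^ 2) * ∏ k ∈ s, Real.sqrt (1 - (f k) ^ 2)
        ≥ Real.sqrt (1 - t ^ 2) * Real.sqrt (1 - S ^ 2) := by
      apply mul_le_mul_of_nonneg_left ihs (Real.sqrt_nonneg _)
    refine le_trans ?_ h1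
    rw [← Real.sqrt_mul (by nlinarith [hfa.1, hfa.2] : (0:ℝ) ≤ 1 - t ^ 2)]
    apply Real.sqrt_le_sqrt
    nlinarith [hfa.1, hS0]

theorem epr_edge_energy_bound {ιK ιL : Type*} (K : Finset ιK) (L : Finset ιL)
    (θi : ιK → ℝ) (θj : ιL → ℝ) (θij : ℝ)
    (hθi : ∀ k ∈ K, θi k ∈ Set.Icc (0:ℝ) (Real.pi / 4))
    (hθj : ∀ l ∈ L, θj l ∈ Set.Icc (0:ℝ) (Real.pi / 4))
    (hθij : θij ∈ Set.Icc (0:ℝ) (Real.pi / 4))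
    (y : ℝ) (hy : y = Real.sin (2 * θij)) (hy01 : y ∈ Set.Icc (0:ℝ) 1)
    (hyK : ∀ k ∈ K, Real.sin (2 * θi k) ∈ Set.Icc (0:ℝ) 1)
    (hyL : ∀ l ∈ L, Real.sin (2 * θj l) ∈ Set.Icc (0:ℝ) 1)
    (hsumK : ∑ k ∈ K, Real.sin (2 * θi k) ≤ 1 - y)
    (hsumL : ∑ l ∈ L, Real.sin (2 * θj l) ≤ 1 - y) :
    1 / 2 + (1 / 2) * (∏ k ∈ K, Real.cos (2 * θi k)) * (∏ l ∈ L, Real.cos (2 * θj l)) +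
        (1 / 2) * Real.sin (2 * θij) *
          ((∏ k ∈ K, Real.cos (2 * θi k)) + (∏ l ∈ L, Real.cos (2 * θj l)))
      ≥ 1 / 2 + y + y ^ 2 / 2 := by
  obtain ⟨hy0, hy1⟩ := hy01
  have hpi := Real.pi_pos
  -- cos(2θ) = sqrt(1 - sin(2θ)^2) for θ ∈ [0, π/4]
  have hcos : ∀ θ : ℝ, θ ∈ Set.Icc (0:ℝ) (Real.pi / 4) →
      Real.cos (2 * θ) = Real.sqrt (1 - Real.sin (2 * θ) ^ 2) := by
    intro θ ⟨h0, h1⟩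
    have hc : 0 ≤ Real.cos (2 * θ) := by
      apply Real.cos_nonneg_of_mem_Icc
      constructor <;> nlinarith
    rw [show (1:ℝ) - Real.sin (2*θ)^2 = Real.cos (2*θ)^2 by
      nlinarith [Real.sin_sq_add_cos_sq (2*θ)], Real.sqrt_sq hc]
  have hPK : ∏ k ∈ K, Real.cos (2 * θi k)
      ≥ Real.sqrt (1 - (∑ k ∈ K, Real.sin (2 * θi k)) ^ 2) := by
    calc ∏ k ∈ K, Real.cos (2 * θi k)
        = ∏ k ∈ K, Real.sqrt (1 - Real.sin (2 * θi k) ^ 2) :=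
          Finset.prod_congr rfl fun k hk => hcos _ (hθi k hk)
      _ ≥ _ := prod_sqrt_one_sub_sq K _ hyK (by linarith)
  have hPL : ∏ l ∈ L, Real.cos (2 * θj l)
      ≥ Real.sqrt (1 - (∑ l ∈ L, Real.sin (2 * θj l)) ^ 2) := by
    calc ∏ l ∈ L, Real.cos (2 * θj l)
        = ∏ l ∈ L, Real.sqrt (1 - Real.sin (2 * θj l) ^ 2) :=
          Finset.prod_congr rfl fun l hl => hcos _ (hθj l hl)
      _ ≥ _ := prod_sqrt_one_sub_sq L _ hyL (by linarith)
  set r := Real.sqrt (2 * y - y ^ 2) with hr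
  have hr0 : 0 ≤ r := Real.sqrt_nonneg _
  have hr2 : r ^ 2 = 2 * y - y ^ 2 := Real.sq_sqrt (by nlinarith)
  have hry : r ≥ y := by nlinarith
  have hSK0 : (0:ℝ) ≤ ∑ k ∈ K, Real.sin (2 * θi k) :=
    Finset.sum_nonneg fun k hk => (hyK k hk).1
  have hSL0 : (0:ℝ) ≤ ∑ l ∈ L, Real.sin (2 * θj l) :=
    Finset.sum_nonneg fun l hl => (hyL l hl).1
  have hK : ∏ k ∈ K, Real.cos (2 * θi k) ≥ r := by
    refine le_trans ?_ hPK
    apply Real.sqrt_le_sqrt; nlinarith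
  have hL : ∏ l ∈ L, Real.cos (2 * θj l) ≥ r := by
    refine le_trans ?_ hPL
    apply Real.sqrt_le_sqrt; nlinarith
  rw [← hy]
  nlinarith [mul_le_mul hK hL hr0 (le_trans hr0 hK)]
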